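/- Let N ≥ 3, let a, b ∈ S^{N−1} ⊂ ℝ^N, and let p ∈ ℝ^N with p ≠ 0. Suppose that for every ξ ∈ ℝ^N with ξ·p = 0 it is not the case that a·ξ > 0 and b·ξ < 0. Then the vectors a, b, p are linearly dependent; equivalently, the line through a point P₀ with direction a and the line through P₀ + p with direction b are coplanar. -/

import Mathlib

open scoped RealInnerProductSpace

noncomputable section

theorem coplanar_of_no_separating_direction (N : ℕ) (hN : 3 ≤ N)
    (a b : EuclideanSpace ℝ (Fin N)) (ha : ‖a‖ = 1) (hb : ‖b‖ = 1)
    (p : EuclideanSpace ℝ (Fin N)) (hp : p ≠ 0)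
    (h : ∀ ξ : EuclideanSpace ℝ (Fin N), ⟪ξ, p⟫ = 0 → ¬(0 < ⟪a, ξ⟫ ∧ ⟪b, ξ⟫ < 0)) :
    ¬ LinearIndependent ℝ ![a, b, p] := by
  intro hli
  have key : ∀ c₀ c₁ c₂ : ℝ, c₀ • a + c₁ • b + c₂ • p = 0 →
      c₀ = 0 ∧ c₁ = 0 ∧ c₂ = 0 := by
    intro c₀ c₁ c₂ hc
    have := Fintype.linearIndependent_iff.mp hli ![c₀, c₁, c₂] ?_
    · exact ⟨this 0, this 1, this 2⟩
    · simpa [Fin.sum_univ_three, add_assoc] using hc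
  have hpn : (0:ℝ) < ‖p‖ := norm_pos_iff.mpr hp
  set α : ℝ := ⟪a, p⟫ / (‖p‖ ^ 2) with hα
  set β : ℝ := ⟪b, p⟫ / (‖p‖ ^ 2) with hβ
  set a' : EuclideanSpace ℝ (Fin N) := a - α • p with ha'
  set b' : EuclideanSpace ℝ (Fin N) := b - β • p with hb'
  have hpp : ⟪p, p⟫ = ‖p‖ ^ 2 := real_inner_self_eq_norm_sq p
  have hp2 : (‖p‖:ℝ) ^ 2 ≠ 0 := by positivity
  have hap : ⟪a', p⟫ = 0 := by
    rw [ha']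
    simp only [inner_sub_left, real_inner_smul_left, hpp, hα]
    field_simp
    ring
  have hbp : ⟪b', p⟫ = 0 := by
    rw [hb']
    simp only [inner_sub_left, real_inner_smul_left, hpp, hβ]
    field_simp
    ring
  have ha0 : a' ≠ 0 := by
    intro h0
    have e : (1:ℝ) • a + (0:ℝ) • b + (-α) • p = a' := by rw [ha']; module
    rw [h0] at e
    exact one_ne_zero (key 1 0 (-α) e).1
  have hb0 : b' ≠ 0 := by
    intro h0
    have e : (0:ℝ) • a + (1:ℝ) • b + (-β) • p = b' := by rw [hb']; module
    rw [h0] at e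
    exact one_ne_zero (key 0 1 (-β) e).2.1
  have hna : (0:ℝ) < ‖a'‖ := norm_pos_iff.mpr ha0
  have hnb : (0:ℝ) < ‖b'‖ := norm_pos_iff.mpr hb0
  have hne : ‖b'‖ • a' ≠ ‖a'‖ • b' := by
    intro heq
    have e : ‖b'‖ • a + (-‖a'‖) • b + (‖a'‖ * β - ‖b'‖ * α) • p
        = ‖b'‖ • a' - ‖a'‖ • b' := by rw [ha', hb']; module
    rw [heq, sub_self] at e
    exact hnb.ne' (key _ _ _ e).1
  have hcs : ⟪a', b'⟫ < ‖a'‖ * ‖b'‖ := inner_lt_norm_mul_iff_real.mpr hne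
  set ξ : EuclideanSpace ℝ (Fin N) := ‖b'‖ • a' - ‖a'‖ • b' with hξ
  have hξp : ⟪ξ, p⟫ = 0 := by
    rw [hξ]
    simp only [inner_sub_left, real_inner_smul_left, hap, hbp]
    ring
  have hpξ : ⟪p, ξ⟫ = 0 := by rwa [real_inner_comm] at hξp
  have hξa : ⟪a', ξ⟫ = ⟪a, ξ⟫ := by
    rw [ha']
    simp only [inner_sub_left, real_inner_smul_left, hpξ]
    ring
  have hξb : ⟪b', ξ⟫ = ⟪b, ξ⟫ := by
    rw [hb']
    simp only [inner_sub_left, real_inner_smul_left, hpξ]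
    ring
  have ea : ⟪a', ξ⟫ = ‖b'‖ * ‖a'‖ ^ 2 - ‖a'‖ * ⟪a', b'⟫ := by
    rw [hξ]
    simp only [inner_sub_right, real_inner_smul_right, real_inner_self_eq_norm_sq]
    try ring
  have eb : ⟪b', ξ⟫ = ‖b'‖ * ⟪a', b'⟫ - ‖a'‖ * ‖b'‖ ^ 2 := by
    rw [hξ]
    simp only [inner_sub_right, real_inner_smul_right, real_inner_self_eq_norm_sq,
      real_inner_comm b' a']
    try ring
  refine h ξ hξp ⟨?_, ?_⟩
  · rw [← hξa, ea]; nlinarith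
  · rw [← hξb, eb]; nlinarith
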